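/- Consider the Sequential Mechanism for a subadditive monotone normalized cost function C: players arrive in order 1,…,n, and player i is allocated a bundle ALG_i ∈ argmax_{S⊆M_i} [v_i(S) − (C(ALG_1,…,ALG_{i−1},S) − C(ALG_1,…,ALG_{i−1}))] and pays that marginal cost. Then for every allocation OPT, the social cost satisfies π(ALG) ≤ n·π(OPT), where π(S) = C(S) + Σ_i [v_i(M_i) − v_i(S_i)]. -/

import Mathlib

open Finset

variable {α : Type*}

theorem stmt18 [DecidableEq α] (n : ℕ) (M : Fin n → Finset α)
    (hM : ∀ i j : Fin n, i ≠ j → Disjoint (M i) (M j))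
    (C : Finset α → ℝ) (hC0 : C ∅ = 0) (hCnn : ∀ S, 0 ≤ C S)
    (hCmono : ∀ S T : Finset α, S ⊆ T → C S ≤ C T)
    (hsubadd : ∀ S T : Finset α, C (S ∪ T) ≤ C S + C T)
    (v : Fin n → Finset α → ℝ) (hv0 : ∀ i, v i ∅ = 0) (hvnn : ∀ i S, 0 ≤ v i S)
    (hvmono : ∀ i, ∀ S T : Finset α, S ⊆ T → T ⊆ M i → v i S ≤ v i T)
    (ALG : Fin n → Finset α) (hALGsub : ∀ i, ALG i ⊆ M i)
    (hgreedy : ∀ i : Fin n, ∀ S : Finset α, S ⊆ M i →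
      v i S - (C ((univ.filter (· < i)).biUnion ALG ∪ S) -
          C ((univ.filter (· < i)).biUnion ALG)) ≤
        v i (ALG i) - (C ((univ.filter (· < i)).biUnion ALG ∪ ALG i) -
          C ((univ.filter (· < i)).biUnion ALG)))
    (OPT : Fin n → Finset α) (hOPT : ∀ i, OPT i ⊆ M i) :
    C (univ.biUnion ALG) + ∑ i, (v i (M i) - v i (ALG i)) ≤
      (n : ℝ) * (C (univ.biUnion OPT) + ∑ i, (v i (M i) - v i (OPT i))) := by
  set T := C (univ.biUnion OPT) + ∑ i, (v i (M i) - v i (OPT i)) with hT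
  set g : ℕ → ℝ :=
    fun k => C ((univ.filter (fun j : Fin n => (j : ℕ) < k)).biUnion ALG) with hg
  have hg0 : g 0 = 0 := by simp [hg, hC0]
  have hgn : g n = C (univ.biUnion ALG) := by
    have : (univ.filter (fun j : Fin n => (j : ℕ) < n)) = univ :=
      Finset.filter_true_of_mem (fun j _ => j.isLt)
    simp [hg, this]
  have hgi : ∀ i : Fin n, g (i : ℕ) = C ((univ.filter (· < i)).biUnion ALG) := by
    intro i
    have : (univ.filter (fun j : Fin n => (j : ℕ) < (i : ℕ))) = univ.filter (· < i) := by
      apply Finset.filter_congr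
      intro j _
      simp
    show C ((univ.filter (fun j : Fin n => (j : ℕ) < (i : ℕ))).biUnion ALG) = _
    rw [this]
  have hstep : ∀ i : Fin n,
      g ((i : ℕ) + 1) = C ((univ.filter (· < i)).biUnion ALG ∪ ALG i) := by
    intro i
    have hfe : (univ.filter (fun j : Fin n => (j : ℕ) < (i : ℕ) + 1)) =
        insert i (univ.filter (· < i)) := by
      ext j
      simp [Nat.lt_succ_iff_lt_or_eq, Fin.ext_iff, or_comm]
      rw [Fin.le_iff_val_le_val, Fin.lt_iff_val_lt_val]; omega
    show C ((univ.filter (fun j : Fin n => (j : ℕ) < (i : ℕ) + 1)).biUnion ALG) = _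
    rw [hfe, Finset.biUnion_insert, Finset.union_comm]
  have key : ∀ i : Fin n,
      (g ((i : ℕ) + 1) - g (i : ℕ)) + (v i (M i) - v i (ALG i)) ≤ T := by
    intro i
    have hgr := hgreedy i (OPT i) (hOPT i)
    have hsub := hsubadd ((univ.filter (· < i)).biUnion ALG) (OPT i)
    have hCopt : C (OPT i) ≤ C (univ.biUnion OPT) :=
      hCmono _ _ (Finset.subset_biUnion_of_mem OPT (mem_univ i))
    have hsum : v i (M i) - v i (OPT i) ≤ ∑ j, (v j (M j) - v j (OPT j)) :=
      Finset.single_le_sum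
        (fun j _ => sub_nonneg.mpr (hvmono j (OPT j) (M j) (hOPT j) subset_rfl))
        (mem_univ i)
    rw [hstep i, hgi i]
    simp only [hT]
    linarith
  have tele : ∑ i : Fin n, (g ((i : ℕ) + 1) - g (i : ℕ)) = C (univ.biUnion ALG) := by
    rw [Fin.sum_univ_eq_sum_range (fun k => g (k + 1) - g k) n,
      Finset.sum_range_sub g n, hgn, hg0, sub_zero]
  calc C (univ.biUnion ALG) + ∑ i, (v i (M i) - v i (ALG i))
      = ∑ i : Fin n, ((g ((i : ℕ) + 1) - g (i : ℕ)) + (v i (M i) - v i (ALG i))) := by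
        rw [Finset.sum_add_distrib, tele]
    _ ≤ ∑ _i : Fin n, T := Finset.sum_le_sum (fun i _ => key i)
    _ = (n : ℝ) * T := by
        simp [Finset.sum_const, nsmul_eq_mul, Finset.card_univ]
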